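/- For all integers i, j, k with 1 ≤ i < j < k ≤ m, Σ_{a∈d*} z_{ij}(a) z_{ik}(a) = N/3, Σ_{a∈d*} z_{ik}(a) z_{jk}(a) = N/3, and Σ_{a∈d*} z_{ij}(a) z_{jk}(a) = −N/3. (Lemma A.4(b).) -/

import Mathlib

open Matrix Finset

namespace OofA

set_option linter.unusedTactic false
set_option linter.unreachableTactic false
set_option linter.unusedVariables false

/-- The index set `S` of pairs `(i,j)` with `i < j`. -/
abbrev Pairs (m : ℕ) := {ij : Fin m × Fin m // ij.1 < ij.2}

/-- `z_{ij}(a)`: for a treatment `a` (a permutation, `a k` being the component placed at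
position `k`), this equals `c h` where `h` is the distance between the positions of the
components `i` and `j` in `a`, with sign `+` if `i` precedes `j` and `-` otherwise. -/
noncomputable def z {m : ℕ} (c : ℕ → ℝ) (a : Equiv.Perm (Fin m)) (ij : Pairs m) : ℝ :=
  if (a.symm ij.1.1 : ℕ) < (a.symm ij.1.2 : ℕ) then
    c (Nat.dist (a.symm ij.1.1 : ℕ) (a.symm ij.1.2 : ℕ))
  else
    -c (Nat.dist (a.symm ij.1.1 : ℕ) (a.symm ij.1.2 : ℕ))

/-- The vector `x(a) = (1, z(a)ᵀ)ᵀ ∈ ℝ^p`, indexed by `Unit ⊕ Pairs m`. -/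
noncomputable def x {m : ℕ} (c : ℕ → ℝ) (a : Equiv.Perm (Fin m)) : (Unit ⊕ Pairs m) → ℝ :=
  Sum.elim (fun _ => (1 : ℝ)) (z c a)

/-- The moment matrix `M(w) = Σ_a w(a) x(a) x(a)ᵀ` of a design measure `w`. -/
noncomputable def momentMatrix {m : ℕ} (c : ℕ → ℝ) (w : Equiv.Perm (Fin m) → ℝ) :
    Matrix (Unit ⊕ Pairs m) (Unit ⊕ Pairs m) ℝ :=
  ∑ a : Equiv.Perm (Fin m), w a • Matrix.vecMulVec (x c a) (x c a)

/-- The moment matrix `M₀` of the uniform design measure `w₀(a) = 1/m!`. -/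
noncomputable def M0 (m : ℕ) (c : ℕ → ℝ) : Matrix (Unit ⊕ Pairs m) (Unit ⊕ Pairs m) ℝ :=
  momentMatrix c (fun _ => 1 / (Nat.factorial m : ℝ))

/-- A signed permutation matrix: exactly one nonzero entry in each row and in each column,
each nonzero entry being `1` or `-1`. -/
def IsSignedPerm {n : Type*} [Fintype n] (R : Matrix n n ℝ) : Prop :=
  (∀ i, ∃! j, R i j ≠ 0) ∧ (∀ j, ∃! i, R i j ≠ 0) ∧
    (∀ i j, R i j ≠ 0 → R i j = 1 ∨ R i j = -1)

/-- `b₀ = (2/(m(m−1))) Σ_{h=1}^{m−1} (m−h) c_h²`. -/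
noncomputable def b0 (m : ℕ) (c : ℕ → ℝ) : ℝ :=
  (2 / ((m : ℝ) * ((m : ℝ) - 1))) *
    ∑ h ∈ Finset.Icc 1 (m - 1), ((m : ℝ) - (h : ℝ)) * (c h) ^ 2

/-- `b₁ = (2/(m(m−1)(m−2))) Σ (m−h₁−h₂) c_{h₁} (2c_{h₁+h₂} − c_{h₂})`,
summed over `h₁, h₂ ≥ 1` with `h₁ + h₂ ≤ m − 1`. -/
noncomputable def b1 (m : ℕ) (c : ℕ → ℝ) : ℝ :=
  (2 / ((m : ℝ) * ((m : ℝ) - 1) * ((m : ℝ) - 2))) *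
    ∑ h1 ∈ Finset.Icc 1 (m - 1), ∑ h2 ∈ Finset.Icc 1 (m - 1 - h1),
      ((m : ℝ) - (h1 : ℝ) - (h2 : ℝ)) * c h1 * (2 * c (h1 + h2) - c h2)

/-- The `q × q` matrix `V` of (7). -/
noncomputable def V (m : ℕ) : Matrix (Pairs m) (Pairs m) ℝ := fun ij kl =>
  if (ij.1.1 = kl.1.1 ∧ ij.1.2 ≠ kl.1.2) ∨ (ij.1.1 ≠ kl.1.1 ∧ ij.1.2 = kl.1.2) then 1
  else if ij.1.1 = kl.1.2 ∨ ij.1.2 = kl.1.1 then -1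
  else 0

lemma three_eps {α : Type*} [LinearOrder α] {a b c : α} (hab : a ≠ b) (hac : a ≠ c) (hbc : b ≠ c) :
    (if a < b then (1:ℝ) else -1) * (if a < c then (1:ℝ) else -1)
      + (if b < a then (1:ℝ) else -1) * (if b < c then (1:ℝ) else -1)
      + (if c < a then (1:ℝ) else -1) * (if c < b then (1:ℝ) else -1) = 1 := by
  rcases hab.lt_or_gt with h1 | h1 <;> rcases hac.lt_or_gt with h2 | h2 <;>
    rcases hbc.lt_or_gt with h3 | h3 <;>
    simp [h1, h2, h3, h1.not_gt, h2.not_gt, h3.not_gt, h1.asymm, h2.asymm, h3.asymm] <;>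
    first
      | exact absurd (h1.trans h3) h2.not_gt
      | exact absurd (h3.trans h1) h2.not_gt
      | exact absurd (h2.trans h3) h1.not_gt
      | exact absurd (h3.trans h2) h1.not_gt
      | norm_num

lemma eps_mul_identity {α : Type*} [LinearOrder α] {a b c : α} (hab : a ≠ b) (hac : a ≠ c) (hbc : b ≠ c) :
    (if a < b then (1:ℝ) else -1) * (if b < c then (1:ℝ) else -1)
      = (if a < b then (1:ℝ) else -1) * (if a < c then (1:ℝ) else -1)
        + (if a < c then (1:ℝ) else -1) * (if b < c then (1:ℝ) else -1) - 1 := by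
  rcases hab.lt_or_gt with h1 | h1 <;> rcases hac.lt_or_gt with h2 | h2 <;>
    rcases hbc.lt_or_gt with h3 | h3 <;>
    simp [h1, h2, h3, h1.not_gt, h2.not_gt, h3.not_gt, h1.asymm, h2.asymm, h3.asymm] <;>
    first
      | exact absurd (h1.trans h3) h2.not_gt
      | exact absurd (h3.trans h1) h2.not_gt
      | exact absurd (h2.trans h3) h1.not_gt
      | exact absurd (h3.trans h2) h1.not_gt
      | norm_num

lemma eps_flip {α : Type*} [LinearOrder α] {a b : α} (hab : a ≠ b) :
    (if a < b then (1:ℝ) else -1) = -(if b < a then (1:ℝ) else -1) := by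
  rcases hab.lt_or_gt with h1 | h1 <;> simp [h1, h1.not_gt, h1.asymm]


/-- post-composition bijection on equivs -/
def postcomp {γ β : Type*} (e : β ≃ β) : (γ ≃ β) ≃ (γ ≃ β) :=
  ⟨fun ρ => ρ.trans e, fun ρ => ρ.trans e.symm,
   fun ρ => by ext t; simp, fun ρ => by ext t; simp⟩

@[simp] lemma postcomp_symm_apply {γ β : Type*} (e : β ≃ β) (ρ : γ ≃ β) (t : β) :
    ((postcomp e) ρ).symm t = ρ.symm (e.symm t) := rfl

lemma zero_sum {s : ℕ} {β : Type*} [Fintype β] [DecidableEq β] {u v : β} (huv : u ≠ v) :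
    ∑ ρ : Fin s ≃ β, (if ρ.symm u < ρ.symm v then (1:ℝ) else -1) = 0 := by
  have key := Equiv.sum_comp (postcomp (Equiv.swap u v))
    (fun ρ : Fin s ≃ β => (if ρ.symm u < ρ.symm v then (1:ℝ) else -1))
  simp only [postcomp_symm_apply, Equiv.symm_swap, Equiv.swap_apply_left,
    Equiv.swap_apply_right] at key
  have h2 : ∀ ρ : Fin s ≃ β,
      (if ρ.symm v < ρ.symm u then (1:ℝ) else -1)
        = -(if ρ.symm u < ρ.symm v then (1:ℝ) else -1) := by
    intro ρ
    exact eps_flip (fun h => huv (ρ.symm.injective h).symm)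
  rw [Finset.sum_congr rfl (fun ρ _ => h2 ρ), Finset.sum_neg_distrib] at key
  linarith


lemma third_sum {s : ℕ} {β : Type*} [Fintype β] [DecidableEq β] {u v w : β}
    (huv : u ≠ v) (huw : u ≠ w) (hvw : v ≠ w) :
    ∑ ρ : Fin s ≃ β, (if ρ.symm u < ρ.symm v then (1:ℝ) else -1)
        * (if ρ.symm u < ρ.symm w then (1:ℝ) else -1)
      = (Fintype.card (Fin s ≃ β) : ℝ) / 3 := by
  set F : (Fin s ≃ β) → ℝ := fun ρ =>
    (if ρ.symm u < ρ.symm v then (1:ℝ) else -1) * (if ρ.symm u < ρ.symm w then (1:ℝ) else -1)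
    with hF
  -- reindex by swap u v : base becomes v
  have k1 := Equiv.sum_comp (postcomp (Equiv.swap u v)) F
  have k2 := Equiv.sum_comp (postcomp (Equiv.swap u w)) F
  simp only [hF, postcomp_symm_apply, Equiv.symm_swap, Equiv.swap_apply_left,
    Equiv.swap_apply_right, Equiv.swap_apply_of_ne_of_ne huw.symm hvw.symm,
    Equiv.swap_apply_of_ne_of_ne huv.symm hvw] at k1 k2
  -- k1 : ∑ ρ, ε(b < a) * ε(b < c) = ∑ F ; k2 : ∑ ρ, ε(c < b? ...) ...
  have key : ∀ ρ : Fin s ≃ β,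
      F ρ + (if ρ.symm v < ρ.symm u then (1:ℝ) else -1) * (if ρ.symm v < ρ.symm w then (1:ℝ) else -1)
        + (if ρ.symm w < ρ.symm v then (1:ℝ) else -1) * (if ρ.symm w < ρ.symm u then (1:ℝ) else -1)
      = 1 := by
    intro ρ
    have h1 : ρ.symm u ≠ ρ.symm v := fun h => huv (ρ.symm.injective h)
    have h2 : ρ.symm u ≠ ρ.symm w := fun h => huw (ρ.symm.injective h)
    have h3 : ρ.symm v ≠ ρ.symm w := fun h => hvw (ρ.symm.injective h)
    have := three_eps h1 h2 h3
    rw [hF]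
    dsimp only
    rw [mul_comm (if ρ.symm w < ρ.symm v then (1:ℝ) else -1)]
    linarith [this]
  have total : (∑ ρ : Fin s ≃ β, F ρ) + (∑ ρ : Fin s ≃ β, F ρ) + (∑ ρ : Fin s ≃ β, F ρ)
      = (Fintype.card (Fin s ≃ β) : ℝ) := by
    nth_rewrite 2 [← k1]
    nth_rewrite 2 [← k2]
    rw [← Finset.sum_add_distrib, ← Finset.sum_add_distrib,
      Finset.sum_congr rfl (fun ρ _ => key ρ), Finset.sum_const, Finset.card_univ]
    simp
  linarith

noncomputable def mkPerm {s : ℕ} (C : Finset (Fin (s + s))) (σ : Fin s ≃ C)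
    (τ : Fin s ≃ (Cᶜ : Finset (Fin (s + s)))) : Equiv.Perm (Fin (s + s)) :=
  finSumFinEquiv.symm.trans
    ((Equiv.sumCongr σ (τ.trans (Equiv.subtypeEquivRight (fun x => Finset.mem_compl)))).trans
      (Equiv.sumCompl (· ∈ C)))

lemma mkPerm_castAdd {s : ℕ} (C : Finset (Fin (s + s))) (σ : Fin s ≃ C)
    (τ : Fin s ≃ (Cᶜ : Finset (Fin (s + s)))) (k : Fin s) :
    mkPerm C σ τ (Fin.castAdd s k) = (σ k : Fin (s + s)) := by
  simp [mkPerm]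

lemma mkPerm_natAdd {s : ℕ} (C : Finset (Fin (s + s))) (σ : Fin s ≃ C)
    (τ : Fin s ≃ (Cᶜ : Finset (Fin (s + s)))) (k : Fin s) :
    mkPerm C σ τ (Fin.natAdd s k) = (τ k : Fin (s + s)) := by
  rw [mkPerm, Equiv.trans_apply, finSumFinEquiv_symm_apply_natAdd, Equiv.trans_apply,
    Equiv.sumCongr_apply, Sum.map_inr, Equiv.sumCompl_apply_inr]
  simp [Equiv.subtypeEquivRight]
  rfl

lemma mkPerm_symm_mem {s : ℕ} {C : Finset (Fin (s + s))} (σ : Fin s ≃ C)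
    (τ : Fin s ≃ (Cᶜ : Finset (Fin (s + s)))) {x : Fin (s + s)} (hx : x ∈ C) :
    (mkPerm C σ τ).symm x = Fin.castAdd s (σ.symm ⟨x, hx⟩) := by
  rw [Equiv.symm_apply_eq, mkPerm_castAdd, Equiv.apply_symm_apply]

lemma mkPerm_symm_not_mem {s : ℕ} {C : Finset (Fin (s + s))} (σ : Fin s ≃ C)
    (τ : Fin s ≃ (Cᶜ : Finset (Fin (s + s)))) {x : Fin (s + s)} (hx : x ∉ C) :
    (mkPerm C σ τ).symm x = Fin.natAdd s (τ.symm ⟨x, Finset.mem_compl.mpr hx⟩) := by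
  rw [Equiv.symm_apply_eq, mkPerm_natAdd, Equiv.apply_symm_apply]

lemma mkPerm_eq_C {s : ℕ} {C C' : Finset (Fin (s + s))} {σ : Fin s ≃ C} {σ' : Fin s ≃ C'}
    {τ : Fin s ≃ (Cᶜ : Finset (Fin (s + s)))} {τ' : Fin s ≃ (C'ᶜ : Finset (Fin (s + s)))}
    (h : mkPerm C σ τ = mkPerm C' σ' τ') : C = C' := by
  have hk : ∀ k : Fin s, ((σ k : Fin (s + s))) = (σ' k : Fin (s + s)) := by
    intro k
    rw [← mkPerm_castAdd C σ τ k, ← mkPerm_castAdd C' σ' τ' k, h]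
  ext z
  constructor
  · intro hz
    have h2 := hk (σ.symm ⟨z, hz⟩)
    rw [Equiv.apply_symm_apply] at h2
    have h3 : z = ((σ' (σ.symm ⟨z, hz⟩)) : Fin (s + s)) := by simpa using h2
    rw [h3]
    exact (σ' (σ.symm ⟨z, hz⟩)).2
  · intro hz
    have h2 := hk (σ'.symm ⟨z, hz⟩)
    rw [Equiv.apply_symm_apply] at h2
    have h3 : z = ((σ (σ'.symm ⟨z, hz⟩)) : Fin (s + s)) := by simpa using h2.symm
    rw [h3]
    exact (σ (σ'.symm ⟨z, hz⟩)).2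

lemma sum_transfer {s : ℕ}
    (f : ∀ C : Finset (Fin (s + s)), C.card = s →
      ((Fin s ≃ C) ≃ (Fin s ≃ (Cᶜ : Finset (Fin (s + s))))))
    (d : Finset (Equiv.Perm (Fin (s + s))))
    (hd : ∀ a : Equiv.Perm (Fin (s + s)), a ∈ d ↔
      ∃ (C : Finset (Fin (s + s))) (hC : C.card = s) (σ : Fin s ≃ C),
        (∀ k : Fin s, a (Fin.castAdd s k) = (σ k : Fin (s + s))) ∧
        (∀ k : Fin s, a (Fin.natAdd s k) = ((f C hC σ) k : Fin (s + s))))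
    (F : Equiv.Perm (Fin (s + s)) → ℝ) :
    ∑ a ∈ d, F a = ∑ C : {C : Finset (Fin (s + s)) // C.card = s},
      ∑ σ : Fin s ≃ (C.1 : Finset (Fin (s + s))), F (mkPerm C.1 σ (f C.1 C.2 σ)) := by
  symm
  rw [← Finset.sum_sigma (Finset.univ) (fun _ => Finset.univ)
    (fun p : Σ C : {C : Finset (Fin (s + s)) // C.card = s},
        (Fin s ≃ (C.1 : Finset (Fin (s + s)))) =>
      F (mkPerm p.1.1 p.2 (f p.1.1 p.1.2 p.2)))]
  refine Finset.sum_bij (fun p _ => mkPerm p.1.1 p.2 (f p.1.1 p.1.2 p.2)) ?_ ?_ ?_ ?_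
  · rintro ⟨⟨C, hC⟩, σ⟩ -
    exact (hd _).mpr ⟨C, hC, σ, fun k => mkPerm_castAdd _ _ _ k, fun k => mkPerm_natAdd _ _ _ k⟩
  · rintro ⟨⟨C, hC⟩, σ⟩ hm1 ⟨⟨C', hC'⟩, σ'⟩ hm2 h
    replace h : mkPerm C σ (f C hC σ) = mkPerm C' σ' (f C' hC' σ') := h
    have hCC : C = C' := mkPerm_eq_C h
    subst hCC
    have hσ : σ = σ' := by
      refine Equiv.ext fun k => Subtype.ext ?_
      rw [← mkPerm_castAdd C σ (f C hC σ) k, ← mkPerm_castAdd C σ' (f C hC' σ') k, h]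
    subst hσ
    rfl
  · intro b hb
    obtain ⟨C, hC, σ, h1, h2⟩ := (hd b).mp hb
    refine ⟨⟨⟨C, hC⟩, σ⟩, Finset.mem_univ _, ?_⟩
    refine Equiv.ext fun p => ?_
    refine Fin.addCases (fun k => ?_) (fun k => ?_) p
    · rw [mkPerm_castAdd, h1]
    · rw [mkPerm_natAdd, h2]
  · intro p hp
    rfl

def swapSubsets {n s : ℕ} (e : Fin n ≃ Fin n) :
    {C : Finset (Fin n) // C.card = s} ≃ {C : Finset (Fin n) // C.card = s} where
  toFun C := ⟨C.1.map e.toEmbedding, by rw [Finset.card_map]; exact C.2⟩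
  invFun C := ⟨C.1.map e.symm.toEmbedding, by rw [Finset.card_map]; exact C.2⟩
  left_inv C := by
    refine Subtype.ext ?_
    simp [Finset.map_map]
  right_inv C := by
    refine Subtype.ext ?_
    simp [Finset.map_map]

lemma sum_swap_subsets {n s : ℕ} (e : Fin n ≃ Fin n) (G : Finset (Fin n) → ℝ) :
    ∑ C : {C : Finset (Fin n) // C.card = s}, G (C.1.map e.toEmbedding)
      = ∑ C : {C : Finset (Fin n) // C.card = s}, G C.1 :=
  Equiv.sum_comp (swapSubsets e) (fun C => G C.1)

/-- indicator -/
def ind {n : ℕ} (C : Finset (Fin n)) (x : Fin n) : ℝ := if x ∈ C then 1 else 0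

lemma ind_map {n : ℕ} (C : Finset (Fin n)) (e : Fin n ≃ Fin n) (x : Fin n) :
    ind (C.map e.toEmbedding) x = ind C (e.symm x) := by
  simp [ind, Finset.mem_map_equiv]

lemma sum_ind_eq {n s : ℕ} {x y : Fin n} :
    ∑ C : {C : Finset (Fin n) // C.card = s}, ind C.1 x
      = ∑ C : {C : Finset (Fin n) // C.card = s}, ind C.1 y := by
  rw [← sum_swap_subsets (Equiv.swap x y) (fun C => ind C x)]
  refine Finset.sum_congr rfl fun C _ => ?_
  rw [ind_map, Equiv.symm_swap, Equiv.swap_apply_left]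

lemma sum_ind_mul_eq {n s : ℕ} {x y x' y' : Fin n} (e : Fin n ≃ Fin n)
    (hx : e.symm x = x') (hy : e.symm y = y') :
    ∑ C : {C : Finset (Fin n) // C.card = s}, ind C.1 x * ind C.1 y
      = ∑ C : {C : Finset (Fin n) // C.card = s}, ind C.1 x' * ind C.1 y' := by
  rw [← sum_swap_subsets e (fun C => ind C x * ind C y)]
  refine Finset.sum_congr rfl fun C _ => ?_
  rw [ind_map, ind_map, hx, hy]

/-- the weight function -/
def uval {n : ℕ} (C : Finset (Fin n)) (x y w : Fin n) : ℝ :=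
  1 + (ind C x - ind C y) + (ind C x - ind C w)
    + 2 * (ind C y * ind C w - ind C y * ind C x)
    + 2 * (ind C y * ind C w - ind C x * ind C w)

lemma sum_uval {n s : ℕ} {x y w : Fin n} (hxy : x ≠ y) (hxw : x ≠ w) (hyw : y ≠ w) :
    ∑ C : {C : Finset (Fin n) // C.card = s}, uval C.1 x y w
      = (Fintype.card {C : Finset (Fin n) // C.card = s} : ℝ) := by
  have e1 : ∑ C : {C : Finset (Fin n) // C.card = s}, ind C.1 x
      = ∑ C : {C : Finset (Fin n) // C.card = s}, ind C.1 y := sum_ind_eq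
  have e2 : ∑ C : {C : Finset (Fin n) // C.card = s}, ind C.1 x
      = ∑ C : {C : Finset (Fin n) // C.card = s}, ind C.1 w := sum_ind_eq
  -- qr = pq via swap x w  (y fixed)
  have e3 : ∑ C : {C : Finset (Fin n) // C.card = s}, ind C.1 y * ind C.1 w
      = ∑ C : {C : Finset (Fin n) // C.card = s}, ind C.1 y * ind C.1 x :=
    sum_ind_mul_eq (Equiv.swap x w)
      (by rw [Equiv.symm_swap, Equiv.swap_apply_of_ne_of_ne hxy.symm hyw])
      (by rw [Equiv.symm_swap, Equiv.swap_apply_right])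
  -- qr = pr via swap x y  (w fixed)
  have e4 : ∑ C : {C : Finset (Fin n) // C.card = s}, ind C.1 y * ind C.1 w
      = ∑ C : {C : Finset (Fin n) // C.card = s}, ind C.1 x * ind C.1 w :=
    sum_ind_mul_eq (Equiv.swap x y)
      (by rw [Equiv.symm_swap, Equiv.swap_apply_right])
      (by rw [Equiv.symm_swap, Equiv.swap_apply_of_ne_of_ne hxw.symm hyw.symm])
  have expand : ∑ C : {C : Finset (Fin n) // C.card = s}, uval C.1 x y w
      = (∑ C : {C : Finset (Fin n) // C.card = s}, (1:ℝ))
        + ((∑ C : {C : Finset (Fin n) // C.card = s}, ind C.1 x)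
            - ∑ C : {C : Finset (Fin n) // C.card = s}, ind C.1 y)
        + ((∑ C : {C : Finset (Fin n) // C.card = s}, ind C.1 x)
            - ∑ C : {C : Finset (Fin n) // C.card = s}, ind C.1 w)
        + 2 * ((∑ C : {C : Finset (Fin n) // C.card = s}, ind C.1 y * ind C.1 w)
            - ∑ C : {C : Finset (Fin n) // C.card = s}, ind C.1 y * ind C.1 x)
        + 2 * ((∑ C : {C : Finset (Fin n) // C.card = s}, ind C.1 y * ind C.1 w)
            - ∑ C : {C : Finset (Fin n) // C.card = s}, ind C.1 x * ind C.1 w) := by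
    simp only [uval]
    rw [Finset.sum_add_distrib, Finset.sum_add_distrib, Finset.sum_add_distrib,
      Finset.sum_add_distrib, Finset.sum_sub_distrib, Finset.sum_sub_distrib,
      ← Finset.mul_sum, ← Finset.mul_sum, Finset.sum_sub_distrib, Finset.sum_sub_distrib]
  rw [expand, ← e1, ← e2]
  have hc : ∑ C : {C : Finset (Fin n) // C.card = s}, (1:ℝ)
      = (Fintype.card {C : Finset (Fin n) // C.card = s} : ℝ) := by simp
  linarith [e3, e4, hc]

section EpsFactors

variable {s : ℕ} {C : Finset (Fin (s + s))} (σ : Fin s ≃ C)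
  (τ : Fin s ≃ (Cᶜ : Finset (Fin (s + s)))) {x y : Fin (s + s)}

lemma eps_mm (hx : x ∈ C) (hy : y ∈ C) :
    (if (((mkPerm C σ τ).symm x : Fin (s+s)) : ℕ) < (((mkPerm C σ τ).symm y : Fin (s+s)) : ℕ)
      then (1:ℝ) else -1)
      = (if σ.symm ⟨x, hx⟩ < σ.symm ⟨y, hy⟩ then (1:ℝ) else -1) := by
  rw [mkPerm_symm_mem σ τ hx, mkPerm_symm_mem σ τ hy]
  exact if_congr (by simp only [Fin.coe_castAdd, Fin.lt_def]) rfl rfl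

lemma eps_mo (hx : x ∈ C) (hy : y ∉ C) :
    (if (((mkPerm C σ τ).symm x : Fin (s+s)) : ℕ) < (((mkPerm C σ τ).symm y : Fin (s+s)) : ℕ)
      then (1:ℝ) else -1) = 1 := by
  rw [mkPerm_symm_mem σ τ hx, mkPerm_symm_not_mem σ τ hy]
  have h1 := (σ.symm ⟨x, hx⟩).isLt
  rw [if_pos]
  simp only [Fin.coe_castAdd, Fin.coe_natAdd]
  omega

lemma eps_om (hx : x ∉ C) (hy : y ∈ C) :
    (if (((mkPerm C σ τ).symm x : Fin (s+s)) : ℕ) < (((mkPerm C σ τ).symm y : Fin (s+s)) : ℕ)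
      then (1:ℝ) else -1) = -1 := by
  rw [mkPerm_symm_not_mem σ τ hx, mkPerm_symm_mem σ τ hy]
  have h1 := (σ.symm ⟨y, hy⟩).isLt
  rw [if_neg]
  simp only [Fin.coe_castAdd, Fin.coe_natAdd]
  omega

lemma eps_oo (hx : x ∉ C) (hy : y ∉ C) :
    (if (((mkPerm C σ τ).symm x : Fin (s+s)) : ℕ) < (((mkPerm C σ τ).symm y : Fin (s+s)) : ℕ)
      then (1:ℝ) else -1)
      = (if τ.symm ⟨x, Finset.mem_compl.mpr hx⟩ < τ.symm ⟨y, Finset.mem_compl.mpr hy⟩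
          then (1:ℝ) else -1) := by
  rw [mkPerm_symm_not_mem σ τ hx, mkPerm_symm_not_mem σ τ hy]
  exact if_congr (by simp only [Fin.coe_natAdd, Fin.lt_def]; omega) rfl rfl

end EpsFactors



lemma card_equiv_fact {s : ℕ} {C : Finset (Fin (s + s))} (hC : C.card = s) :
    Fintype.card (Fin s ≃ (C : Finset (Fin (s + s)))) = s.factorial := by
  have h1 : Fintype.card (Fin s) = Fintype.card (C : Finset (Fin (s + s))) := by
    simp [Fintype.card_coe, hC]
  rw [Fintype.card_equiv (Fintype.equivOfCardEq h1)]
  simp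

lemma card_equiv_fact_compl {s : ℕ} {C : Finset (Fin (s + s))} (hC : C.card = s) :
    Fintype.card (Fin s ≃ ((Cᶜ : Finset (Fin (s + s))) : Finset (Fin (s + s)))) = s.factorial := by
  have hcc : (Cᶜ : Finset (Fin (s + s))).card = s := by
    rw [Finset.card_compl, Fintype.card_fin, hC]; omega
  have h1 : Fintype.card (Fin s) = Fintype.card ((Cᶜ : Finset (Fin (s + s)))) := by
    rw [Fintype.card_fin, Fintype.card_coe, hcc]
  rw [Fintype.card_equiv (Fintype.equivOfCardEq h1)]
  simp

lemma inner_eval {s : ℕ} {C : Finset (Fin (s + s))} (hC : C.card = s)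
    (g : (Fin s ≃ C) ≃ (Fin s ≃ (Cᶜ : Finset (Fin (s + s)))))
    {x y w : Fin (s + s)} (hxy : x ≠ y) (hxw : x ≠ w) (hyw : y ≠ w) :
    ∑ σ : Fin s ≃ C,
      ((if (((mkPerm C σ (g σ)).symm x : Fin (s + s)) : ℕ)
          < (((mkPerm C σ (g σ)).symm y : Fin (s + s)) : ℕ) then (1:ℝ) else -1)
        * (if (((mkPerm C σ (g σ)).symm x : Fin (s + s)) : ℕ)
          < (((mkPerm C σ (g σ)).symm w : Fin (s + s)) : ℕ) then (1:ℝ) else -1))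
      = (s.factorial : ℝ) / 3 * uval C x y w := by
  by_cases hx : x ∈ C <;> by_cases hy : y ∈ C <;> by_cases hw : w ∈ C
  · -- all in C
    have hstep : ∀ σ : Fin s ≃ C, ((if (((mkPerm C σ (g σ)).symm x : Fin (s + s)) : ℕ)
          < (((mkPerm C σ (g σ)).symm y : Fin (s + s)) : ℕ) then (1:ℝ) else -1)
        * (if (((mkPerm C σ (g σ)).symm x : Fin (s + s)) : ℕ)
          < (((mkPerm C σ (g σ)).symm w : Fin (s + s)) : ℕ) then (1:ℝ) else -1))
        = (if σ.symm ⟨x, hx⟩ < σ.symm ⟨y, hy⟩ then (1:ℝ) else -1)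
          * (if σ.symm ⟨x, hx⟩ < σ.symm ⟨w, hw⟩ then (1:ℝ) else -1) := fun σ => by
      rw [eps_mm σ (g σ) hx hy, eps_mm σ (g σ) hx hw]
    rw [Finset.sum_congr rfl fun σ _ => hstep σ]
    rw [third_sum (fun h => hxy (congrArg Subtype.val h))
      (fun h => hxw (congrArg Subtype.val h)) (fun h => hyw (congrArg Subtype.val h))]
    rw [card_equiv_fact hC]
    have hu : uval C x y w = 1 := by simp [uval, ind, hx, hy, hw]
    rw [hu, mul_one]
  · -- x,y in, w out : zero
    have hstep : ∀ σ : Fin s ≃ C, ((if (((mkPerm C σ (g σ)).symm x : Fin (s + s)) : ℕ)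
          < (((mkPerm C σ (g σ)).symm y : Fin (s + s)) : ℕ) then (1:ℝ) else -1)
        * (if (((mkPerm C σ (g σ)).symm x : Fin (s + s)) : ℕ)
          < (((mkPerm C σ (g σ)).symm w : Fin (s + s)) : ℕ) then (1:ℝ) else -1))
        = (if σ.symm ⟨x, hx⟩ < σ.symm ⟨y, hy⟩ then (1:ℝ) else -1) := fun σ => by
      rw [eps_mm σ (g σ) hx hy, eps_mo σ (g σ) hx hw, mul_one]
    rw [Finset.sum_congr rfl fun σ _ => hstep σ,
      zero_sum (fun h => hxy (congrArg Subtype.val h))]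
    have hu : uval C x y w = 0 := by (simp [uval, ind, hx, hy, hw]; try norm_num)
    rw [hu, mul_zero]
  · -- x,w in, y out : zero
    have hstep : ∀ σ : Fin s ≃ C, ((if (((mkPerm C σ (g σ)).symm x : Fin (s + s)) : ℕ)
          < (((mkPerm C σ (g σ)).symm y : Fin (s + s)) : ℕ) then (1:ℝ) else -1)
        * (if (((mkPerm C σ (g σ)).symm x : Fin (s + s)) : ℕ)
          < (((mkPerm C σ (g σ)).symm w : Fin (s + s)) : ℕ) then (1:ℝ) else -1))
        = (if σ.symm ⟨x, hx⟩ < σ.symm ⟨w, hw⟩ then (1:ℝ) else -1) := fun σ => by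
      rw [eps_mm σ (g σ) hx hw, eps_mo σ (g σ) hx hy, one_mul]
    rw [Finset.sum_congr rfl fun σ _ => hstep σ,
      zero_sum (fun h => hxw (congrArg Subtype.val h))]
    have hu : uval C x y w = 0 := by (simp [uval, ind, hx, hy, hw]; try norm_num)
    rw [hu, mul_zero]
  · -- x in, y,w out : constant 1
    have hstep : ∀ σ : Fin s ≃ C, ((if (((mkPerm C σ (g σ)).symm x : Fin (s + s)) : ℕ)
          < (((mkPerm C σ (g σ)).symm y : Fin (s + s)) : ℕ) then (1:ℝ) else -1)
        * (if (((mkPerm C σ (g σ)).symm x : Fin (s + s)) : ℕ)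
          < (((mkPerm C σ (g σ)).symm w : Fin (s + s)) : ℕ) then (1:ℝ) else -1))
        = 1 := fun σ => by
      rw [eps_mo σ (g σ) hx hy, eps_mo σ (g σ) hx hw, mul_one]
    rw [Finset.sum_congr rfl fun σ _ => hstep σ, Finset.sum_const, Finset.card_univ,
      card_equiv_fact hC]
    have hu : uval C x y w = 3 := by (simp [uval, ind, hx, hy, hw]; try norm_num)
    rw [hu]
    simp [nsmul_eq_mul]
  · -- x out, y,w in : constant 1
    have hstep : ∀ σ : Fin s ≃ C, ((if (((mkPerm C σ (g σ)).symm x : Fin (s + s)) : ℕ)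
          < (((mkPerm C σ (g σ)).symm y : Fin (s + s)) : ℕ) then (1:ℝ) else -1)
        * (if (((mkPerm C σ (g σ)).symm x : Fin (s + s)) : ℕ)
          < (((mkPerm C σ (g σ)).symm w : Fin (s + s)) : ℕ) then (1:ℝ) else -1))
        = 1 := fun σ => by
      rw [eps_om σ (g σ) hx hy, eps_om σ (g σ) hx hw]
      norm_num
    rw [Finset.sum_congr rfl fun σ _ => hstep σ, Finset.sum_const, Finset.card_univ,
      card_equiv_fact hC]
    have hu : uval C x y w = 3 := by (simp [uval, ind, hx, hy, hw]; try norm_num)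
    rw [hu]
    simp [nsmul_eq_mul]
  · -- x out, y in, w out : zero via complement
    have hstep : ∀ σ : Fin s ≃ C, ((if (((mkPerm C σ (g σ)).symm x : Fin (s + s)) : ℕ)
          < (((mkPerm C σ (g σ)).symm y : Fin (s + s)) : ℕ) then (1:ℝ) else -1)
        * (if (((mkPerm C σ (g σ)).symm x : Fin (s + s)) : ℕ)
          < (((mkPerm C σ (g σ)).symm w : Fin (s + s)) : ℕ) then (1:ℝ) else -1))
        = -(if (g σ).symm ⟨x, Finset.mem_compl.mpr hx⟩
              < (g σ).symm ⟨w, Finset.mem_compl.mpr hw⟩ then (1:ℝ) else -1) := fun σ => by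
      rw [eps_om σ (g σ) hx hy, eps_oo σ (g σ) hx hw]
      ring
    rw [Finset.sum_congr rfl fun σ _ => hstep σ, Finset.sum_neg_distrib,
      Equiv.sum_comp g (fun τ => (if τ.symm ⟨x, Finset.mem_compl.mpr hx⟩
        < τ.symm ⟨w, Finset.mem_compl.mpr hw⟩ then (1:ℝ) else -1)),
      zero_sum (fun h => hxw (congrArg Subtype.val h))]
    have hu : uval C x y w = 0 := by (simp [uval, ind, hx, hy, hw]; try norm_num)
    rw [hu, mul_zero]
    norm_num
  · -- x out, y out, w in : zero via complement
    have hstep : ∀ σ : Fin s ≃ C, ((if (((mkPerm C σ (g σ)).symm x : Fin (s + s)) : ℕ)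
          < (((mkPerm C σ (g σ)).symm y : Fin (s + s)) : ℕ) then (1:ℝ) else -1)
        * (if (((mkPerm C σ (g σ)).symm x : Fin (s + s)) : ℕ)
          < (((mkPerm C σ (g σ)).symm w : Fin (s + s)) : ℕ) then (1:ℝ) else -1))
        = -(if (g σ).symm ⟨x, Finset.mem_compl.mpr hx⟩
              < (g σ).symm ⟨y, Finset.mem_compl.mpr hy⟩ then (1:ℝ) else -1) := fun σ => by
      rw [eps_om σ (g σ) hx hw, eps_oo σ (g σ) hx hy]
      ring
    rw [Finset.sum_congr rfl fun σ _ => hstep σ, Finset.sum_neg_distrib,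
      Equiv.sum_comp g (fun τ => (if τ.symm ⟨x, Finset.mem_compl.mpr hx⟩
        < τ.symm ⟨y, Finset.mem_compl.mpr hy⟩ then (1:ℝ) else -1)),
      zero_sum (fun h => hxy (congrArg Subtype.val h))]
    have hu : uval C x y w = 0 := by (simp [uval, ind, hx, hy, hw]; try norm_num)
    rw [hu, mul_zero]
    norm_num
  · -- all out
    have hstep : ∀ σ : Fin s ≃ C, ((if (((mkPerm C σ (g σ)).symm x : Fin (s + s)) : ℕ)
          < (((mkPerm C σ (g σ)).symm y : Fin (s + s)) : ℕ) then (1:ℝ) else -1)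
        * (if (((mkPerm C σ (g σ)).symm x : Fin (s + s)) : ℕ)
          < (((mkPerm C σ (g σ)).symm w : Fin (s + s)) : ℕ) then (1:ℝ) else -1))
        = (if (g σ).symm ⟨x, Finset.mem_compl.mpr hx⟩
              < (g σ).symm ⟨y, Finset.mem_compl.mpr hy⟩ then (1:ℝ) else -1)
          * (if (g σ).symm ⟨x, Finset.mem_compl.mpr hx⟩
              < (g σ).symm ⟨w, Finset.mem_compl.mpr hw⟩ then (1:ℝ) else -1) := fun σ => by
      rw [eps_oo σ (g σ) hx hy, eps_oo σ (g σ) hx hw]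
    rw [Finset.sum_congr rfl fun σ _ => hstep σ,
      Equiv.sum_comp g (fun τ => (if τ.symm ⟨x, Finset.mem_compl.mpr hx⟩
          < τ.symm ⟨y, Finset.mem_compl.mpr hy⟩ then (1:ℝ) else -1)
        * (if τ.symm ⟨x, Finset.mem_compl.mpr hx⟩
          < τ.symm ⟨w, Finset.mem_compl.mpr hw⟩ then (1:ℝ) else -1)),
      third_sum (fun h => hxy (congrArg Subtype.val h))
        (fun h => hxw (congrArg Subtype.val h)) (fun h => hyw (congrArg Subtype.val h)),
      card_equiv_fact_compl hC]
    have hu : uval C x y w = 1 := by (simp [uval, ind, hx, hy, hw]; try norm_num)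
    rw [hu, mul_one]


lemma card_subtype_choose (n s : ℕ) :
    Fintype.card {C : Finset (Fin n) // C.card = s} = n.choose s := by
  rw [Fintype.card_subtype]
  have h : (Finset.univ.filter fun C : Finset (Fin n) => C.card = s)
      = Finset.powersetCard s Finset.univ := by
    rw [Finset.powersetCard_eq_filter, Finset.powerset_univ]
  rw [h, Finset.card_powersetCard, Finset.card_univ, Fintype.card_fin]

lemma N_eq (s : ℕ) : ((s + s).factorial / s.factorial : ℕ)
    = s.factorial * ((s + s).choose s) := by
  have h := Nat.choose_mul_factorial_mul_factorial (Nat.le_add_right s s)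
  have h2 : s + s - s = s := by omega
  rw [h2] at h
  have h3 : (s + s).factorial = (s.factorial * ((s + s).choose s)) * s.factorial := by
    rw [← h]; ring
  rw [h3, Nat.mul_div_cancel _ (Nat.factorial_pos s)]

lemma main_sum {s : ℕ}
    (f : ∀ C : Finset (Fin (s + s)), C.card = s →
      ((Fin s ≃ C) ≃ (Fin s ≃ (Cᶜ : Finset (Fin (s + s))))))
    (d : Finset (Equiv.Perm (Fin (s + s))))
    (hd : ∀ a : Equiv.Perm (Fin (s + s)), a ∈ d ↔
      ∃ (C : Finset (Fin (s + s))) (hC : C.card = s) (σ : Fin s ≃ C),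
        (∀ k : Fin s, a (Fin.castAdd s k) = (σ k : Fin (s + s))) ∧
        (∀ k : Fin s, a (Fin.natAdd s k) = ((f C hC σ) k : Fin (s + s))))
    {x y w : Fin (s + s)} (hxy : x ≠ y) (hxw : x ≠ w) (hyw : y ≠ w) :
    ∑ a ∈ d, ((if ((a.symm x : Fin (s + s)) : ℕ) < ((a.symm y : Fin (s + s)) : ℕ)
        then (1:ℝ) else -1)
      * (if ((a.symm x : Fin (s + s)) : ℕ) < ((a.symm w : Fin (s + s)) : ℕ)
        then (1:ℝ) else -1))
      = ((Nat.factorial (s + s) / Nat.factorial s : ℕ) : ℝ) / 3 := by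
  rw [sum_transfer f d hd]
  rw [Finset.sum_congr rfl (fun C _ => inner_eval C.2 (f C.1 C.2) hxy hxw hyw)]
  rw [← Finset.mul_sum, sum_uval hxy hxw hyw, card_subtype_choose, N_eq]
  push_cast
  ring

lemma sum_one {s : ℕ}
    (f : ∀ C : Finset (Fin (s + s)), C.card = s →
      ((Fin s ≃ C) ≃ (Fin s ≃ (Cᶜ : Finset (Fin (s + s))))))
    (d : Finset (Equiv.Perm (Fin (s + s))))
    (hd : ∀ a : Equiv.Perm (Fin (s + s)), a ∈ d ↔
      ∃ (C : Finset (Fin (s + s))) (hC : C.card = s) (σ : Fin s ≃ C),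
        (∀ k : Fin s, a (Fin.castAdd s k) = (σ k : Fin (s + s))) ∧
        (∀ k : Fin s, a (Fin.natAdd s k) = ((f C hC σ) k : Fin (s + s)))) :
    ∑ a ∈ d, (1:ℝ) = ((Nat.factorial (s + s) / Nat.factorial s : ℕ) : ℝ) := by
  rw [sum_transfer f d hd (fun _ => (1:ℝ))]
  rw [Finset.sum_congr rfl (fun C _ => by
    rw [Finset.sum_const, Finset.card_univ, card_equiv_fact C.2, nsmul_eq_mul, mul_one])]
  rw [Finset.sum_const, Finset.card_univ, card_subtype_choose, N_eq, nsmul_eq_mul]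
  push_cast
  ring

lemma z_eq {s : ℕ} (a : Equiv.Perm (Fin (s + s))) {p q : Fin (s + s)} (hpq : p < q) :
    z (fun _ => 1) a ⟨(p, q), hpq⟩
      = if ((a.symm p : Fin (s + s)) : ℕ) < ((a.symm q : Fin (s + s)) : ℕ)
        then (1:ℝ) else -1 := by
  simp [z]

lemma pos_ne {s : ℕ} (a : Equiv.Perm (Fin (s + s))) {p q : Fin (s + s)} (h : p ≠ q) :
    ((a.symm p : Fin (s + s)) : ℕ) ≠ ((a.symm q : Fin (s + s)) : ℕ) :=
  fun hh => h (a.symm.injective (Fin.val_injective hh))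

/-- Lemma A.4(b): for the fractional design `d*` (even case `m = 2s`, pairwise order
model `c_h = 1`) and `i < j < k`, `Σ_{a ∈ d*} z_{ij}(a) z_{ik}(a) = N/3`,
`Σ_{a ∈ d*} z_{ik}(a) z_{jk}(a) = N/3` and `Σ_{a ∈ d*} z_{ij}(a) z_{jk}(a) = −N/3`,
where `N = m!/s!`. -/
theorem statement17 {s : ℕ} (hs : 2 ≤ s)
    (f : ∀ C : Finset (Fin (s + s)), C.card = s →
      ((Fin s ≃ C) ≃ (Fin s ≃ (Cᶜ : Finset (Fin (s + s))))))
    (d : Finset (Equiv.Perm (Fin (s + s))))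
    (hd : ∀ a : Equiv.Perm (Fin (s + s)), a ∈ d ↔
      ∃ (C : Finset (Fin (s + s))) (hC : C.card = s) (σ : Fin s ≃ C),
        (∀ k : Fin s, a (Fin.castAdd s k) = (σ k : Fin (s + s))) ∧
        (∀ k : Fin s, a (Fin.natAdd s k) = ((f C hC σ) k : Fin (s + s))))
    (i j k : Fin (s + s)) (hij : i < j) (hjk : j < k) :
    (∑ a ∈ d, z (fun _ => 1) a ⟨(i, j), hij⟩ * z (fun _ => 1) a ⟨(i, k), hij.trans hjk⟩) =
        ((Nat.factorial (s + s) / Nat.factorial s : ℕ) : ℝ) / 3 ∧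
      (∑ a ∈ d, z (fun _ => 1) a ⟨(i, k), hij.trans hjk⟩ * z (fun _ => 1) a ⟨(j, k), hjk⟩) =
        ((Nat.factorial (s + s) / Nat.factorial s : ℕ) : ℝ) / 3 ∧
      (∑ a ∈ d, z (fun _ => 1) a ⟨(i, j), hij⟩ * z (fun _ => 1) a ⟨(j, k), hjk⟩) =
        -(((Nat.factorial (s + s) / Nat.factorial s : ℕ) : ℝ) / 3) := by
  have hij' : i ≠ j := ne_of_lt hij
  have hjk' : j ≠ k := ne_of_lt hjk
  have hik' : i ≠ k := ne_of_lt (hij.trans hjk)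
  have T1 : (∑ a ∈ d, z (fun _ => 1) a ⟨(i, j), hij⟩ * z (fun _ => 1) a ⟨(i, k), hij.trans hjk⟩)
      = ((Nat.factorial (s + s) / Nat.factorial s : ℕ) : ℝ) / 3 := by
    rw [Finset.sum_congr rfl (fun a _ => by rw [z_eq a hij, z_eq a (hij.trans hjk)])]
    exact main_sum f d hd hij' hik' hjk'
  have T2 : (∑ a ∈ d, z (fun _ => 1) a ⟨(i, k), hij.trans hjk⟩ * z (fun _ => 1) a ⟨(j, k), hjk⟩)
      = ((Nat.factorial (s + s) / Nat.factorial s : ℕ) : ℝ) / 3 := by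
    rw [Finset.sum_congr rfl (fun a _ => by
      rw [z_eq a (hij.trans hjk), z_eq a hjk, eps_flip (pos_ne a hik'),
        eps_flip (pos_ne a hjk'), neg_mul_neg])]
    exact main_sum f d hd (fun h => hik' h.symm) (fun h => hjk' h.symm) hij'
  refine ⟨T1, T2, ?_⟩
  have hpt : ∀ a ∈ d, z (fun _ => 1) a ⟨(i, j), hij⟩ * z (fun _ => 1) a ⟨(j, k), hjk⟩
      = z (fun _ => 1) a ⟨(i, j), hij⟩ * z (fun _ => 1) a ⟨(i, k), hij.trans hjk⟩
        + z (fun _ => 1) a ⟨(i, k), hij.trans hjk⟩ * z (fun _ => 1) a ⟨(j, k), hjk⟩ - 1 := by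
    intro a _
    rw [z_eq a hij, z_eq a hjk, z_eq a (hij.trans hjk)]
    exact eps_mul_identity (pos_ne a hij') (pos_ne a hik') (pos_ne a hjk')
  rw [Finset.sum_congr rfl hpt, Finset.sum_sub_distrib, Finset.sum_add_distrib,
    T1, T2, sum_one f d hd]
  ring
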